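/- Let P be a group of errors with |P| > 2 and C an [[n,k]] encoder with degenerate distance d_q ≥ 2. Then there exists a constant c with 0 < c < 1 such that for every N ≥ 1 and every d ≥ 0: a^{⊗N}(d) ≤ c^d · (|P|−1)^d · binom(Nn, d). -/

import Mathlib

open scoped BigOperators

namespace Turbo

variable {P : Type} [Group P]

/-- Weight of an error: the number of non-identity coordinates. -/
noncomputable def wt {n : ℕ} (E : Fin n → P) : ℕ := {i | E i ≠ 1}.ncard

/-- Pad a finite sequence of blocks to an infinite one by identity blocks. -/
def pad {β : Type} [One β] {N : ℕ} (x : Fin N → β) : ℕ → β :=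
  fun i => if h : i < N then x ⟨i, h⟩ else 1

/-- All blocks of a stabilizer sequence have coordinates in `Z`. -/
def ZValued (Z : Subgroup P) {s : ℕ} (S : ℕ → Fin s → P) : Prop := ∀ i j, S i j ∈ Z

/-- Intermediate memory error `M_i` of a convolutional morphism built from the seed `F`. -/
def convMem {m k s n : ℕ}
    (F : ((Fin m → P) × (Fin k → P) × (Fin s → P)) → ((Fin n → P) × (Fin m → P)))
    (M : Fin m → P) (L : ℕ → Fin k → P) (S : ℕ → Fin s → P) : ℕ → Fin m → P
  | 0 => M
  | i + 1 => (F (convMem F M L S i, L i, S i)).2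

/-- The `i`-th physical output block `P_{i+1}` of the convolutional morphism. -/
def convOut {m k s n : ℕ}
    (F : ((Fin m → P) × (Fin k → P) × (Fin s → P)) → ((Fin n → P) × (Fin m → P)))
    (M : Fin m → P) (L : ℕ → Fin k → P) (S : ℕ → Fin s → P) (i : ℕ) : Fin n → P :=
  (F (convMem F M L S i, L i, S i)).1

/-- Weight of the physical output `π_N` (first `N` physical blocks). -/
noncomputable def outWt {m k s n : ℕ}
    (F : ((Fin m → P) × (Fin k → P) × (Fin s → P)) → ((Fin n → P) × (Fin m → P)))
    (M : Fin m → P) (L : ℕ → Fin k → P) (S : ℕ → Fin s → P) (N : ℕ) : ℕ :=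
  ∑ i ∈ Finset.range N, wt (convOut F M L S i)

/-- Weight of the full output `𝒞_N(E) = (P_1, …, P_N, M_N)`. -/
noncomputable def fullWt {m k s n : ℕ}
    (F : ((Fin m → P) × (Fin k → P) × (Fin s → P)) → ((Fin n → P) × (Fin m → P)))
    (M : Fin m → P) (L : ℕ → Fin k → P) (S : ℕ → Fin s → P) (N : ℕ) : ℕ :=
  outWt F M L S N + wt (convMem F M L S N)

/-- The output `𝒞_∞(E)` of the infinite convolutional morphism has infinite weight. -/
def InfOutput {m k s n : ℕ}
    (F : ((Fin m → P) × (Fin k → P) × (Fin s → P)) → ((Fin n → P) × (Fin m → P)))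
    (M : Fin m → P) (L : ℕ → Fin k → P) (S : ℕ → Fin s → P) : Prop :=
  {i : ℕ | convOut F M L S i ≠ 1}.Infinite

/-- The information part of an infinite input has exactly one non-identity letter. -/
def OneInfoLetter {k : ℕ} (L : ℕ → Fin k → P) : Prop :=
  ∃! p : ℕ × Fin k, L p.1 p.2 ≠ 1

/-- A recursive `[[n,k,s,m]]` morphism. -/
def Recursive {m k s n : ℕ} (Z : Subgroup P)
    (F : ((Fin m → P) × (Fin k → P) × (Fin s → P)) → ((Fin n → P) × (Fin m → P))) : Prop :=
  ∀ (L : ℕ → Fin k → P) (S : ℕ → Fin s → P),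
    OneInfoLetter L → ZValued Z S → InfOutput F 1 L S

/-- A systematic morphism: the output weight dominates the information weight. -/
def Systematic {m k s n : ℕ}
    (F : ((Fin m → P) × (Fin k → P) × (Fin s → P)) → ((Fin n → P) × (Fin m → P))) : Prop :=
  ∀ (N : ℕ) (M : Fin m → P) (L : ℕ → Fin k → P) (S : ℕ → Fin s → P),
    (∑ i ∈ Finset.range N, wt (L i)) ≤ fullWt F M L S N

/-- The set `M₁` of memory errors giving an infinite output on trivial information input. -/
def M1 {m k s n : ℕ} (Z : Subgroup P)
    (F : ((Fin m → P) × (Fin k → P) × (Fin s → P)) → ((Fin n → P) × (Fin m → P))) :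
    Set (Fin m → P) :=
  {M | ∀ S : ℕ → Fin s → P, ZValued Z S → InfOutput F M 1 S}

/-- The set of candidate speeds of a morphism. -/
def speedSet {m k s n : ℕ} (Z : Subgroup P)
    (F : ((Fin m → P) × (Fin k → P) × (Fin s → P)) → ((Fin n → P) × (Fin m → P))) : Set ℕ :=
  {η | 0 < η ∧ ∀ M ∈ M1 Z F, ∀ S : ℕ → Fin s → P, ZValued Z S → 1 ≤ outWt F M 1 S η}

/-- `η` is the speed of the morphism `F`. -/
def IsSpeed {m k s n : ℕ} (Z : Subgroup P)
    (F : ((Fin m → P) × (Fin k → P) × (Fin s → P)) → ((Fin n → P) × (Fin m → P)))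
    (η : ℕ) : Prop :=
  IsLeast (speedSet Z F) η

/-- The set `𝕀` of memory errors accessible from the identity memory with trivial
information and `Z`-valued stabilizers. -/
def Iset {m k s n : ℕ} (Z : Subgroup P)
    (F : ((Fin m → P) × (Fin k → P) × (Fin s → P)) → ((Fin n → P) × (Fin m → P))) :
    Set (Fin m → P) :=
  {M | ∃ (N : ℕ) (S : ℕ → Fin s → P), ZValued Z S ∧ M = convMem F 1 1 S N}

/- ### Block `[[n,k]]` encoders -/

/-- `E` is undetected for the `[[n,k]]` encoder `C`. -/
def Undetected {k n : ℕ} (Z : Subgroup P)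
    (C : ((Fin k → P) × (Fin (n - k) → P)) ≃* (Fin n → P)) (E : Fin n → P) : Prop :=
  E ≠ 1 ∧ ∀ j, (C.symm E).2 j ∈ Z

/-- `E` is harmful for the `[[n,k]]` encoder `C`. -/
def Harmful {k n : ℕ} (Z : Subgroup P)
    (C : ((Fin k → P) × (Fin (n - k) → P)) ≃* (Fin n → P)) (E : Fin n → P) : Prop :=
  Undetected Z C E ∧ (C.symm E).1 ≠ 1

/-- The distance `d_c` of an `[[n,k]]` encoder. -/
noncomputable def encDist {k n : ℕ} (Z : Subgroup P)
    (C : ((Fin k → P) × (Fin (n - k) → P)) ≃* (Fin n → P)) : ℕ :=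
  sInf {w | ∃ E, Harmful Z C E ∧ wt E = w}

/-- The degenerate distance `d_q` of an `[[n,k]]` encoder. -/
noncomputable def encDegenDist {k n : ℕ} (Z : Subgroup P)
    (C : ((Fin k → P) × (Fin (n - k) → P)) ≃* (Fin n → P)) : ℕ :=
  sInf {w | ∃ E, Undetected Z C E ∧ wt E = w}

/-- Weight distribution `a^{⊗N}(d)` of the blockwise encoder `C^{⊗N}`. -/
noncomputable def aTensor {k n : ℕ} (Z : Subgroup P)
    (C : ((Fin k → P) × (Fin (n - k) → P)) ≃* (Fin n → P)) (N d : ℕ) : ℕ :=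
  Set.ncard {E : (Fin N → Fin k → P) × (Fin N → Fin (n - k) → P) |
    (∀ i j, E.2 i j ∈ Z) ∧ E.1 ≠ 1 ∧ (∑ i, wt (C (E.1 i, E.2 i))) = d}

/- ### `[[n,k,m]]` encoders and their truncated decoders -/

/-- The truncated decoder `C̄` of an `[[n,k,m]]` encoder `C`, as a `[[k,n,0,m]]` morphism. -/
def truncDecoder {m k n : ℕ}
    (C : ((Fin m → P) × (Fin k → P) × (Fin (n - k) → P)) ≃* ((Fin n → P) × (Fin m → P))) :
    ((Fin m → P) × (Fin n → P) × (Fin 0 → P)) → ((Fin k → P) × (Fin m → P)) :=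
  fun x => ((C.symm (x.2.1, x.1)).2.1, (C.symm (x.2.1, x.1)).1)

/-- Weight distribution `a_N(w, d)` of a convolutional morphism. -/
noncomputable def aN {m k s n : ℕ} (Z : Subgroup P)
    (F : ((Fin m → P) × (Fin k → P) × (Fin s → P)) → ((Fin n → P) × (Fin m → P)))
    (N w d : ℕ) : ℕ :=
  Set.ncard {ML : (Fin m → P) × (Fin N → Fin k → P) |
    (wt ML.1 + ∑ i, wt (ML.2 i)) = w ∧
    ∃ S : Fin N → Fin s → P, (∀ i j, S i j ∈ Z) ∧
      fullWt F ML.1 (pad ML.2) (pad S) N = d}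

/-- Weight distribution `a_N(w, ≤ d)` of a convolutional morphism. -/
noncomputable def aNle {m k s n : ℕ} (Z : Subgroup P)
    (F : ((Fin m → P) × (Fin k → P) × (Fin s → P)) → ((Fin n → P) × (Fin m → P)))
    (N w : ℕ) (d : ℝ) : ℕ :=
  Set.ncard {ML : (Fin m → P) × (Fin N → Fin k → P) |
    (wt ML.1 + ∑ i, wt (ML.2 i)) = w ∧
    ∃ S : Fin N → Fin s → P, (∀ i j, S i j ∈ Z) ∧
      (fullWt F ML.1 (pad ML.2) (pad S) N : ℝ) ≤ d}

/- ### Traces and detours -/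

/-- Replace every information letter at (1-indexed flattened) position `> p` by the identity. -/
def truncAfter {k : ℕ} (L : ℕ → Fin k → P) (p : ℕ) : ℕ → Fin k → P :=
  fun i j => if i * k + (j : ℕ) + 1 ≤ p then L i j else 1

/-- `q` is the (1-indexed flattened) position of a non-identity information letter of the
first `N` information blocks. -/
def IsInfoPos {k : ℕ} (N : ℕ) (L : ℕ → Fin k → P) (q : ℕ) : Prop :=
  ∃ (i : ℕ) (j : Fin k), i < N ∧ q = i * k + (j : ℕ) + 1 ∧ L i j ≠ 1

/-- The information part of the `i`-th truncature `E_{∖i}`. -/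
def truncInfo {k : ℕ} (L : ℕ → Fin k → P) (p : ℕ → ℕ) : ℕ → (ℕ → Fin k → P)
  | 0 => 1
  | i + 1 => truncAfter L (p i)

/-- The number `N_i` of blocks making up the `i`-th truncature (with `N_0 = 0`):
the block containing the position `p i`. -/
def cutOf (k : ℕ) (p : ℕ → ℕ) : ℕ → ℕ
  | 0 => 0
  | i + 1 => (p i - 1) / k + 1

/-- Extend a stabilizer sequence: the first `cut` blocks come from `S`, the rest from `St`. -/
def extendS {s : ℕ} (S : ℕ → Fin s → P) (cut : ℕ) (St : ℕ → Fin s → P) : ℕ → Fin s → P :=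
  fun j => if j < cut then S j else St (j - cut)

/-- The intermediate memory error `M_i` attached to the `i`-th truncature `E_{∖i}`. -/
def traceMem {m k s n : ℕ}
    (F : ((Fin m → P) × (Fin k → P) × (Fin s → P)) → ((Fin n → P) × (Fin m → P)))
    (M : Fin m → P) (L : ℕ → Fin k → P) (S : ℕ → Fin s → P) (p : ℕ → ℕ) : ℕ → Fin m → P
  | 0 => M
  | i + 1 => convMem F M (truncAfter L (p i)) S ((p i - 1) / k + 1)

/-- Paper-indexed positions: `pp p 0 = 0` and `pp p j = p (j-1)` for `j ≥ 1`. -/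
def pp (p : ℕ → ℕ) : ℕ → ℕ
  | 0 => 0
  | j + 1 => p j

/-- The segment `[a, c)` of the trace `b` is a terminating detour: a nonempty run of `1`'s
followed by a single final `0`. -/
def IsTermDetour (b : ℕ → Prop) (a c : ℕ) : Prop :=
  a + 1 < c ∧ (∀ t, a ≤ t → t + 1 < c → b t) ∧ ¬ b (c - 1)

/-- The segment `[a, c)` of the trace `b` is a detour: a nonempty run of `1`'s, possibly
completed with a single final `0`. -/
def IsDetour (b : ℕ → Prop) (a c : ℕ) : Prop :=
  (a < c ∧ ∀ t, a ≤ t → t < c → b t) ∨ IsTermDetour b a c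

end Turbo

open Finset in
private lemma wt_eq_card {P : Type} [Group P] {n : ℕ} [DecidablePred (fun x : P => x ≠ 1)]
    (E : Fin n → P) : Turbo.wt E = #(Finset.univ.filter (fun i => E i ≠ 1)) := by
  rw [Turbo.wt, ← Set.ncard_coe_finset]
  congr 1
  ext i; simp

/-- uniqueness of undetected completion -/
private lemma undet_unique {P : Type} [Group P] {k n : ℕ} (Z : Subgroup P)
    (C : ((Fin k → P) × (Fin (n - k) → P)) ≃* (Fin n → P))
    (hdq : 2 ≤ Turbo.encDegenDist Z C) (u v : Fin n → P)
    (hu : ∀ j, (C.symm u).2 j ∈ Z) (hv : ∀ j, (C.symm v).2 j ∈ Z)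
    (j0 : Fin n) (h : ∀ j, j ≠ j0 → u j = v j) : u = v := by
  by_contra hne
  have hw1 : u * v⁻¹ ≠ 1 := by
    intro h1; exact hne (mul_inv_eq_one.mp h1)
  have hund : Turbo.Undetected Z C (u * v⁻¹) := by
    refine ⟨hw1, fun j => ?_⟩
    rw [map_mul, map_inv]
    exact Z.mul_mem (hu j) (Z.inv_mem (hv j))
  have hset : {j : Fin n | (u * v⁻¹) j ≠ 1} = {j0} := by
    have hsub : {j : Fin n | (u * v⁻¹) j ≠ 1} ⊆ {j0} := by
      intro j hj
      by_contra hj0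
      exact hj (by simp [Pi.mul_apply, Pi.inv_apply, h j hj0])
    obtain ⟨j, hj⟩ : ∃ j, (u * v⁻¹) j ≠ 1 := by
      by_contra hall
      push_neg at hall
      exact hw1 (funext fun j => hall j)
    have hjj : j = j0 := hsub hj
    subst hjj
    exact Set.Subset.antisymm hsub (by simpa using hj)
  have hwt : Turbo.wt (u * v⁻¹) = 1 := by
    rw [Turbo.wt, hset, Set.ncard_singleton]
  have hle : Turbo.encDegenDist Z C ≤ 1 :=
    Nat.sInf_le ⟨u * v⁻¹, hund, hwt⟩
  omega

open Turbo in
/-- Bound 2E: weight distribution of the blockwise outer encoder when `|P| > 2`. -/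
theorem bound_2E {P : Type} [Group P] [Finite P] (Z : Subgroup P) (hZ : Z ≠ ⊤)
    (hP : 2 < Nat.card P)
    {k n : ℕ} (hkn : k ≤ n)
    (C : ((Fin k → P) × (Fin (n - k) → P)) ≃* (Fin n → P))
    (hdq : 2 ≤ encDegenDist Z C) :
    ∃ c : ℝ, 0 < c ∧ c < 1 ∧ ∀ N : ℕ, 1 ≤ N → ∀ d : ℕ,
      (aTensor Z C N d : ℝ) ≤
        c ^ d * ((Nat.card P : ℝ) - 1) ^ d * ((N * n).choose d : ℝ) := by
  classical
  have hFP : Fintype P := Fintype.ofFinite P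
  have hcard : (3:ℕ) ≤ Nat.card P := hP
  set q : ℕ := Nat.card P - 1 with hq
  have hq2 : 2 ≤ q := by omega
  have hqR : ((q : ℕ) : ℝ) = (Nat.card P : ℝ) - 1 := by
    have h1 : (1:ℕ) ≤ Nat.card P := by omega
    rw [hq]
    push_cast [Nat.cast_sub h1]
    ring
  rcases Nat.eq_zero_or_pos n with hn0 | hn
  · -- degenerate case n = 0
    refine ⟨1/2, by norm_num, by norm_num, fun N _ d => ?_⟩
    have hk0 : k = 0 := by omega
    have h0 : aTensor Z C N d = 0 := by
      rw [aTensor, Set.ncard_eq_zero]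
      ext E
      simp only [Set.mem_setOf_eq, Set.mem_empty_iff_false, iff_false, not_and]
      intro _ h1
      exact (h1 (funext fun i => funext fun j => absurd j.2 (by omega))).elim
    rw [h0]
    have h2 : (0:ℝ) ≤ ((Nat.card P : ℝ) - 1) := by rw [← hqR]; positivity
    push_cast
    positivity
  · -- main case
    have hq1R : (1:ℝ) < (q:ℝ) := by exact_mod_cast hq2
    have hq0R : (0:ℝ) < (q:ℝ) := by linarith
    have hnR : (0:ℝ) < (n:ℝ) := by exact_mod_cast hn
    set c : ℝ := (q:ℝ) ^ (-(1:ℝ)/(n:ℝ)) with hc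
    have hc0 : 0 < c := Real.rpow_pos_of_pos hq0R _
    have hc1 : c < 1 := Real.rpow_lt_one_of_one_lt_of_neg hq1R
      (div_neg_of_neg_of_pos (by norm_num) hnR)
    refine ⟨c, hc0, hc1, fun N _ d => ?_⟩
    set ι := (Fin N × Fin n) with hι
    set out : ((Fin N → Fin k → P) × (Fin N → Fin (n - k) → P)) → ι → P :=
      fun E p => C (E.1 p.1, E.2 p.1) p.2 with hout_def
    set row : Finset ι → Fin N → Finset (Fin n) :=
      fun A i => Finset.univ.filter (fun j => (i, j) ∈ A) with hrow_def
    set isLast : Finset ι → ι → Prop :=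
      fun A p => (row A p.1).max = (p.2 : WithBot (Fin n)) with hisLast_def
    set Bset : Finset ι → Finset ι := fun A => A.filter (fun p => ¬ isLast A p) with hBset_def
    set suppF : ((Fin N → Fin k → P) × (Fin N → Fin (n - k) → P)) → Finset ι :=
      fun E => (Finset.univ : Finset ι).filter (fun p => out E p ≠ 1) with hsuppF_def
    set Tset : Set ((Fin N → Fin k → P) × (Fin N → Fin (n - k) → P)) :=
      {E | (∀ i j, E.2 i j ∈ Z) ∧ E.1 ≠ 1 ∧ (∑ i, wt (C (E.1 i, E.2 i))) = d} with hTset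
    set W : Set (Finset ι × (ι → P)) :=
      {x | x.1.card = d ∧ ∀ p, (p ∈ Bset x.1 → x.2 p ≠ 1) ∧ (p ∉ Bset x.1 → x.2 p = 1)} with hW
    have haT : aTensor Z C N d = Tset.ncard := rfl
    -- support cardinality
    have hrow_card : ∀ (A : Finset ι) (i : Fin N),
        (A.filter (fun p => p.1 = i)).card = (row A i).card := by
      intro A i
      apply Finset.card_bij (fun p _ => p.2)
      · rintro ⟨i', j⟩ hp
        rcases Finset.mem_filter.mp hp with ⟨hpA, hpi⟩
        subst hpi
        exact Finset.mem_filter.mpr ⟨Finset.mem_univ _, hpA⟩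
      · rintro ⟨i1, j1⟩ hp1 ⟨i2, j2⟩ hp2 hj
        rcases Finset.mem_filter.mp hp1 with ⟨_, h1⟩
        rcases Finset.mem_filter.mp hp2 with ⟨_, h2⟩
        simp only at h1 h2 hj
        subst h1; subst h2; subst hj; rfl
      · intro j hj
        rcases Finset.mem_filter.mp hj with ⟨_, hjA⟩
        exact ⟨(i, j), Finset.mem_filter.mpr ⟨hjA, rfl⟩, rfl⟩
    have hsupp_card : ∀ E, (suppF E).card = ∑ i, Turbo.wt (C (E.1 i, E.2 i)) := by
      intro E
      rw [Finset.card_eq_sum_card_fiberwise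
        (f := Prod.fst) (t := Finset.univ) (fun x _ => Finset.mem_univ x.1)]
      apply Finset.sum_congr rfl
      intro i _
      rw [hrow_card (suppF E) i, wt_eq_card]
      congr 1
      ext j
      simp only [hrow_def, hsuppF_def, Finset.mem_filter, Finset.mem_univ, true_and]
      exact Iff.rfl
    -- the injection
    set f : ((Fin N → Fin k → P) × (Fin N → Fin (n - k) → P)) → (Finset ι × (ι → P)) :=
      fun E => (suppF E, fun p => if isLast (suppF E) p then 1 else out E p) with hf
    have hmaps : ∀ E ∈ Tset, f E ∈ W := by
      rintro E ⟨hZv, hne, hsum⟩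
      refine ⟨by rw [hf]; exact (hsupp_card E).trans hsum, fun p => ⟨?_, ?_⟩⟩
      · intro hpB
        rcases Finset.mem_filter.mp hpB with ⟨hpA, hnl⟩
        simp only [hf, if_neg hnl]
        rcases Finset.mem_filter.mp hpA with ⟨_, hpo⟩
        split_ifs with hh
        · exact absurd hh hnl
        · exact hpo
      · intro hpB
        by_cases hl : isLast (suppF E) p
        · simp only [hf, if_pos hl]
        · simp only [hf, if_neg hl]
          by_contra hne1
          exact hpB (Finset.mem_filter.mpr
            ⟨Finset.mem_filter.mpr ⟨Finset.mem_univ _, hne1⟩, hl⟩)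
    have hinj : Set.InjOn f Tset := by
      rintro E hE E' hE' hfe
      have hA : suppF E = suppF E' := congrArg Prod.fst hfe
      have hg := congrArg Prod.snd hfe
      simp only [hf] at hg
      have hout : ∀ i, C (E.1 i, E.2 i) = C (E'.1 i, E'.2 i) := by
        intro i
        have hu : ∀ j, (C.symm (C (E.1 i, E.2 i))).2 j ∈ Z := by
          intro j; rw [MulEquiv.symm_apply_apply]; exact hE.1 i j
        have hv : ∀ j, (C.symm (C (E'.1 i, E'.2 i))).2 j ∈ Z := by
          intro j; rw [MulEquiv.symm_apply_apply]; exact hE'.1 i j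
        rcases hmax : (row (suppF E) i).max with _ | jmax
        · -- empty row
          have hrow0 : row (suppF E) i = ∅ := Finset.max_eq_bot.mp hmax
          funext j
          have h1 : (i, j) ∉ suppF E := by
            intro hmem
            have hmem' : j ∈ row (suppF E) i :=
              Finset.mem_filter.mpr ⟨Finset.mem_univ _, hmem⟩
            rw [hrow0] at hmem'
            exact absurd hmem' (Finset.notMem_empty _)
          have h2 : (i, j) ∉ suppF E' := hA ▸ h1
          have e1 : out E (i, j) = 1 := by
            by_contra hcon
            exact h1 (Finset.mem_filter.mpr ⟨Finset.mem_univ _, hcon⟩)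
          have e2 : out E' (i, j) = 1 := by
            by_contra hcon
            exact h2 (Finset.mem_filter.mpr ⟨Finset.mem_univ _, hcon⟩)
          exact e1.trans e2.symm
        · apply undet_unique Z C hdq _ _ hu hv jmax
          intro j hj
          have hnl : ¬ isLast (suppF E) (i, j) := by
            simp only [hisLast_def]
            rw [hmax]
            intro hsome
            exact hj (WithBot.coe_inj.mp hsome).symm
          have hnl' : ¬ isLast (suppF E') (i, j) := hA ▸ hnl
          have hgj := congrFun hg (i, j)
          rw [if_neg hnl, if_neg hnl'] at hgj
          exact hgj
      have hEq : ∀ i, (E.1 i, E.2 i) = (E'.1 i, E'.2 i) := fun i => C.injective (hout i)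
      exact Prod.ext (funext fun i => congrArg Prod.fst (hEq i))
        (funext fun i => congrArg Prod.snd (hEq i))
    have hTW : Tset.ncard ≤ W.ncard :=
      Set.ncard_le_ncard_of_injOn f hmaps hinj (Set.toFinite W)
    -- counting W
    set Wf : Finset (Finset ι × (ι → P)) := Finset.univ.filter (· ∈ W) with hWf
    have hWW : W.ncard = Wf.card := by
      rw [← Set.ncard_coe_finset]
      congr 1
      ext x
      simp [hWf]
    have hfib : Wf.card =
        ∑ A ∈ Finset.powersetCard d (Finset.univ : Finset ι),
          (Wf.filter (fun x => x.1 = A)).card := by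
      apply Finset.card_eq_sum_card_fiberwise
      intro x hx
      rcases Finset.mem_filter.mp hx with ⟨_, hw⟩
      exact Finset.mem_powersetCard.mpr ⟨Finset.subset_univ _, hw.1⟩
    -- fiber bound
    have hPne : Fintype.card {y : P // y ≠ 1} = q := by
      have h1 : Fintype.card {y : P // y ≠ 1} = Fintype.card P - 1 := Set.card_ne_eq (1 : P)
      rw [h1, hq, Nat.card_eq_fintype_card]
    obtain ⟨y0, hy0⟩ := Fintype.exists_ne_of_one_lt_card
      (α := P) (by rw [← Nat.card_eq_fintype_card]; omega) 1
    have hfiber_le : ∀ A : Finset ι,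
        (Wf.filter (fun x => x.1 = A)).card ≤ q ^ (Bset A).card := by
      intro A
      have hle : (Wf.filter (fun x => x.1 = A)).card ≤
          (Finset.univ : Finset (↥(Bset A) → {y : P // y ≠ 1})).card := by
        apply Finset.card_le_card_of_injOn
          (fun x => fun p : ↥(Bset A) =>
            if h : x.2 p.1 ≠ 1 then (⟨x.2 p.1, h⟩ : {y : P // y ≠ 1}) else ⟨y0, hy0⟩)
        · exact fun _ _ => Finset.mem_univ _
        · intro x hx x' hx' hxy
          simp only [Finset.coe_filter, Set.mem_setOf_eq, hWf, Finset.mem_filter,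
            Finset.mem_univ, true_and] at hx hx'
          obtain ⟨hxW, hx1⟩ := hx
          obtain ⟨hx'W, hx'1⟩ := hx'
          refine Prod.ext (hx1.trans hx'1.symm) (funext fun p => ?_)
          by_cases hp : p ∈ Bset A
          · have h1 : x.2 p ≠ 1 := (hxW.2 p).1 (hx1 ▸ hp)
            have h2 : x'.2 p ≠ 1 := (hx'W.2 p).1 (hx'1 ▸ hp)
            have h3 := congrFun hxy (⟨p, hp⟩ : ↥(Bset A))
            simp only [dif_pos h1, dif_pos h2, Subtype.mk.injEq] at h3
            exact h3
          · exact ((hxW.2 p).2 (hx1 ▸ hp)).trans (((hx'W.2 p).2 (hx'1 ▸ hp)).symm)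
      calc (Wf.filter (fun x => x.1 = A)).card
          ≤ _ := hle
        _ = q ^ (Bset A).card := by
            rw [Finset.card_univ, Fintype.card_fun, hPne, Fintype.card_coe]
    -- bound on Bset card
    have hAbound : ∀ A ∈ Finset.powersetCard d (Finset.univ : Finset ι),
        ((Bset A).card : ℝ) ≤ (d:ℝ) - (d:ℝ)/(n:ℝ) := by
      intro A hA
      have hAd : A.card = d := (Finset.mem_powersetCard.mp hA).2
      set L : Finset ι := A.filter (fun p => isLast A p) with hL
      have hsplit : L.card + (Bset A).card = d := by
        rw [← hAd, hL, hBset_def]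
        exact Finset.card_filter_add_card_filter_not _
      have hLcard : L.card =
          (Finset.univ.filter (fun i : Fin N => (row A i).Nonempty)).card := by
        apply Finset.card_bij (fun p _ => p.1)
        · intro p hp
          rcases Finset.mem_filter.mp hp with ⟨_, hlast⟩
          exact Finset.mem_filter.mpr ⟨Finset.mem_univ _, ⟨p.2, Finset.mem_of_max hlast⟩⟩
        · intro p1 hp1 p2 hp2 h1
          rcases Finset.mem_filter.mp hp1 with ⟨_, e1⟩
          rcases Finset.mem_filter.mp hp2 with ⟨_, e2⟩
          simp only [hisLast_def] at e1 e2
          rw [h1] at e1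
          rw [e1] at e2
          exact Prod.ext h1 (WithBot.coe_inj.mp e2)
        · intro i hi
          obtain ⟨jm, hjm⟩ := Finset.max_of_nonempty (Finset.mem_filter.mp hi).2
          refine ⟨(i, jm), Finset.mem_filter.mpr ⟨?_, hjm⟩, rfl⟩
          have hjm' := Finset.mem_of_max hjm
          exact (Finset.mem_filter.mp hjm').2
      have hdn : d ≤ L.card * n := by
        have h1 : A.card = ∑ i : Fin N, (A.filter (fun p => p.1 = i)).card :=
          Finset.card_eq_sum_card_fiberwise (fun x _ => Finset.mem_univ x.1)
        have h2 : d = ∑ i ∈ Finset.univ.filter (fun i : Fin N => (row A i).Nonempty),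
            (row A i).card := by
          rw [← hAd, h1]
          rw [Finset.sum_congr rfl (fun i _ => hrow_card A i)]
          refine (Finset.sum_subset (Finset.filter_subset _ _) ?_).symm
          intro i _ hi
          have : ¬ (row A i).Nonempty := by simpa using hi
          simp [Finset.not_nonempty_iff_eq_empty.mp this]
        have h3 : ∑ i ∈ Finset.univ.filter (fun i : Fin N => (row A i).Nonempty),
            (row A i).card ≤
            ∑ _i ∈ Finset.univ.filter (fun i : Fin N => (row A i).Nonempty), n :=
          Finset.sum_le_sum (fun i _ => by
            simpa using Finset.card_le_univ (row A i))
        calc d = ∑ i ∈ Finset.univ.filter (fun i : Fin N => (row A i).Nonempty),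
              (row A i).card := h2
          _ ≤ ∑ _i ∈ Finset.univ.filter (fun i : Fin N => (row A i).Nonempty), n := h3
          _ = (Finset.univ.filter (fun i : Fin N => (row A i).Nonempty)).card * n := by
              rw [Finset.sum_const, smul_eq_mul]
          _ = L.card * n := by rw [hLcard]
      have hLn : (d:ℝ)/(n:ℝ) ≤ (L.card:ℝ) := by
        rw [div_le_iff₀ hnR]
        exact_mod_cast hdn
      have hBL : ((Bset A).card : ℝ) = (d:ℝ) - (L.card:ℝ) := by
        have := hsplit
        push_cast [← this]
        ring
      linarith
    -- final assembly
    have hterm : ∀ A ∈ Finset.powersetCard d (Finset.univ : Finset ι),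
        ((q:ℝ)) ^ ((Bset A).card) ≤ (q:ℝ) ^ ((d:ℝ) - (d:ℝ)/(n:ℝ)) := by
      intro A hA
      rw [← Real.rpow_natCast (q:ℝ) ((Bset A).card)]
      exact Real.rpow_le_rpow_of_exponent_le (le_of_lt hq1R) (hAbound A hA)
    have hpow : c ^ d * ((Nat.card P : ℝ) - 1) ^ d = (q:ℝ) ^ ((d:ℝ) - (d:ℝ)/(n:ℝ)) := by
      rw [← hqR, hc]
      rw [← Real.rpow_natCast ((q:ℝ) ^ (-(1:ℝ)/(n:ℝ))) d, ← Real.rpow_natCast (q:ℝ) d,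
        ← Real.rpow_mul (le_of_lt hq0R), ← Real.rpow_add hq0R]
      congr 1
      field_simp
      ring
    have hchoose : (Finset.powersetCard d (Finset.univ : Finset ι)).card = (N * n).choose d := by
      rw [Finset.card_powersetCard, Finset.card_univ]
      congr 1
      show Fintype.card (Fin N × Fin n) = N * n
      simp
    calc (aTensor Z C N d : ℝ)
        = (Tset.ncard : ℝ) := by rw [haT]
      _ ≤ (Wf.card : ℝ) := by exact_mod_cast hTW.trans_eq hWW
      _ = ∑ A ∈ Finset.powersetCard d (Finset.univ : Finset ι),
            (((Wf.filter (fun x => x.1 = A)).card : ℕ) : ℝ) := by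
          rw [hfib]; push_cast; ring
      _ ≤ ∑ A ∈ Finset.powersetCard d (Finset.univ : Finset ι),
            ((q:ℝ)) ^ ((Bset A).card) := by
          apply Finset.sum_le_sum
          intro A _
          exact_mod_cast hfiber_le A
      _ ≤ ∑ _A ∈ Finset.powersetCard d (Finset.univ : Finset ι),
            (q:ℝ) ^ ((d:ℝ) - (d:ℝ)/(n:ℝ)) := Finset.sum_le_sum hterm
      _ = ((N * n).choose d : ℝ) * ((q:ℝ) ^ ((d:ℝ) - (d:ℝ)/(n:ℝ))) := by
          rw [Finset.sum_const, hchoose, nsmul_eq_mul]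
      _ = c ^ d * ((Nat.card P : ℝ) - 1) ^ d * ((N * n).choose d : ℝ) := by
          rw [hpow]; ring
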